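/- Let V be a finite set and f : 2^V → ℝ a submodular function with f(∅) = 0. Then max{x⁻(V) : x ∈ B(f)} = min{f(S) : S ⊆ V}. -/

import Mathlib

open Finset

noncomputable section
open scoped Classical

variable {V : Type*} [Fintype V] [DecidableEq V]

/-- A set function `f : 2^V → ℝ` is submodular if
`f(X∩Y) + f(X∪Y) ≤ f(X) + f(Y)` for all `X, Y ⊆ V`. -/
def IsSubmodular (f : Finset V → ℝ) : Prop :=
  ∀ X Y : Finset V, f (X ∩ Y) + f (X ∪ Y) ≤ f X + f Y

/-- The base polytope `B(f)` of a submodular function. -/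
def basePolytope (f : Finset V → ℝ) : Set (V → ℝ) :=
  {x | (∀ S : Finset V, ∑ v ∈ S, x v ≤ f S) ∧ (∑ v, x v) = f Finset.univ}

lemma exists_base (f : Finset V → ℝ) (hf : IsSubmodular f) (h0 : f ∅ = 0) :
    (basePolytope f).Nonempty := by
  set n := Fintype.card V with hn
  set e := Fintype.equivFin V with he
  set F : ℕ → Finset V := fun k => univ.filter (fun u => (e u : ℕ) < k) with hF
  set x : V → ℝ := fun v => f (F ((e v : ℕ) + 1)) - f (F (e v : ℕ)) with hx
  have feas : ∀ S : Finset V, ∑ w ∈ S, x w ≤ f S := by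
    intro S
    induction S using Finset.strongInduction with
    | _ S ih =>
      rcases S.eq_empty_or_nonempty with rfl | hS
      · simp [h0]
      · obtain ⟨v, hvS, hmax⟩ := S.exists_max_image (fun w => (e w : ℕ)) hS
        have h1 : S ∩ F (e v : ℕ) = S.erase v := by
          ext w
          simp only [hF, Finset.mem_inter, Finset.mem_filter, Finset.mem_univ, true_and,
            Finset.mem_erase]
          constructor
          · rintro ⟨hw, hlt⟩
            exact ⟨fun h => by subst h; exact lt_irrefl _ hlt, hw⟩
          · rintro ⟨hne, hw⟩
            refine ⟨hw, lt_of_le_of_ne (hmax w hw) ?_⟩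
            intro h
            exact hne (e.injective (Fin.val_injective h))
        have h2 : S ∪ F (e v : ℕ) = F ((e v : ℕ) + 1) := by
          ext w
          simp only [hF, Finset.mem_union, Finset.mem_filter, Finset.mem_univ, true_and,
            Nat.lt_succ_iff]
          constructor
          · rintro (hw | hlt)
            · exact hmax w hw
            · exact le_of_lt hlt
          · intro hle
            rcases eq_or_lt_of_le hle with h | h
            · left
              have : w = v := e.injective (Fin.val_injective h)
              rw [this]; exact hvS
            · right; exact h
        have hsub := hf S (F (e v : ℕ))
        rw [h1, h2] at hsub
        have hih := ih (S.erase v) (Finset.erase_ssubset hvS)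
        have hsplit : ∑ w ∈ S, x w = ∑ w ∈ S.erase v, x w + x v := by
          rw [Finset.sum_erase_add S x hvS]
        rw [hsplit, hx]
        simp only
        linarith
  have htel : ∑ w, x w = f univ := by
    have h1 : ∑ w, x w = ∑ i : Fin n, (f (F ((i : ℕ) + 1)) - f (F (i : ℕ))) :=
      Fintype.sum_equiv e _ _ (fun v => rfl)
    have h2 : ∑ i : Fin n, (f (F ((i : ℕ) + 1)) - f (F (i : ℕ)))
        = ∑ i ∈ Finset.range n, (f (F (i + 1)) - f (F i)) :=
      Fin.sum_univ_eq_sum_range (fun i => f (F (i + 1)) - f (F i)) n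
    have h3 : ∑ i ∈ Finset.range n, (f (F (i + 1)) - f (F i)) = f (F n) - f (F 0) :=
      Finset.sum_range_sub (fun i => f (F i)) n
    have hFn : F n = univ := by
      ext w; simp [hF, (e w).isLt]; exact (e w).isLt
    have hF0 : F 0 = ∅ := by
      ext w; simp [hF]
    rw [h1, h2, h3, hFn, hF0, h0, sub_zero]
  exact ⟨x, feas, htel⟩

lemma exists_maximizer (f : Finset V → ℝ) (hf : IsSubmodular f) (h0 : f ∅ = 0) :
    ∃ x ∈ basePolytope f, ∀ y ∈ basePolytope f,
      (∑ v, min (y v) 0) ≤ (∑ v, min (x v) 0) := by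
  have hne := exists_base f hf h0
  have hclosed : IsClosed (basePolytope f) := by
    have heq : basePolytope f =
        (⋂ S : Finset V, {x : V → ℝ | ∑ v ∈ S, x v ≤ f S}) ∩
          {x : V → ℝ | ∑ v, x v = f univ} := by
      ext x; simp [basePolytope, Set.mem_iInter]
    rw [heq]
    refine IsClosed.inter (isClosed_iInter fun S => isClosed_le ?_ continuous_const)
      (isClosed_eq ?_ continuous_const)
    · exact continuous_finset_sum S fun v _ => continuous_apply v
    · exact continuous_finset_sum univ fun v _ => continuous_apply v
  have hsub : basePolytope f ⊆
      Set.pi Set.univ (fun v => Set.Icc (f univ - f (univ.erase v)) (f {v})) := by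
    intro x hx
    rw [Set.mem_univ_pi]
    intro v
    constructor
    · have h1 := hx.1 (univ.erase v)
      have h2 : x v + ∑ w ∈ univ.erase v, x w = ∑ w, x w :=
        Finset.add_sum_erase univ x (mem_univ v)
      have h3 := hx.2
      linarith
    · have := hx.1 {v}
      simpa using this
  have hcomp : IsCompact (basePolytope f) :=
    IsCompact.of_isClosed_subset (isCompact_univ_pi fun v => isCompact_Icc) hclosed hsub
  have hcont : Continuous (fun x : V → ℝ => ∑ v, min (x v) 0) :=
    continuous_finset_sum univ fun v _ => (continuous_apply v).min continuous_const
  obtain ⟨x, hxK, hxmax⟩ := hcomp.exists_isMaxOn hne hcont.continuousOn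
  exact ⟨x, hxK, fun y hy => hxmax hy⟩


/-- Edmonds' min-max theorem: `max{x⁻(V) : x ∈ B(f)} = min{f(S) : S ⊆ V}`.
There is a base `x` and a set `S` with `x⁻(V) = f(S)`, and weak duality
`y⁻(V) ≤ f(T)` holds for every base `y` and every set `T`. -/
theorem edmonds_minmax (f : Finset V → ℝ) (hf : IsSubmodular f) (h0 : f ∅ = 0) :
    ∃ x ∈ basePolytope f, ∃ S : Finset V,
      (∑ v, min (x v) 0) = f S ∧
      ∀ y ∈ basePolytope f, ∀ T : Finset V, (∑ v, min (y v) 0) ≤ f T := by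
  -- weak duality
  have weak : ∀ y ∈ basePolytope f, ∀ T : Finset V, (∑ v, min (y v) 0) ≤ f T := by
    intro y hy T
    have h1 : ∑ v, min (y v) 0 = ∑ v ∈ T, min (y v) 0 + ∑ v ∈ univ \ T, min (y v) 0 := by
      rw [← Finset.sum_sdiff (Finset.subset_univ T), add_comm]
    have h2 : ∑ v ∈ univ \ T, min (y v) 0 ≤ 0 :=
      Finset.sum_nonpos fun v _ => min_le_right _ _
    have h3 : ∑ v ∈ T, min (y v) 0 ≤ ∑ v ∈ T, y v :=
      Finset.sum_le_sum fun v _ => min_le_left _ _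
    have h4 := hy.1 T
    linarith
  obtain ⟨x, hxK, hxmax⟩ := exists_maximizer f hf h0
  refine ⟨x, hxK, ?_⟩
  set tight : Finset V → Prop := fun A => ∑ w ∈ A, x w = f A with htight
  have tight_univ : tight univ := hxK.2
  have tight_empty : tight ∅ := by simp [htight, h0]
  have tight_union : ∀ A B, tight A → tight B → tight (A ∪ B) := by
    intro A B hA hB
    have key := hf A B
    have hsum : ∑ w ∈ A ∪ B, x w + ∑ w ∈ A ∩ B, x w = ∑ w ∈ A, x w + ∑ w ∈ B, x w :=
      Finset.sum_union_inter
    have h1 := hxK.1 (A ∪ B)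
    have h2 := hxK.1 (A ∩ B)
    simp only [htight] at hA hB ⊢
    linarith
  -- exchange lemma
  have exchange : ∀ v u, x v < 0 → 0 < x u → ∃ A, tight A ∧ v ∈ A ∧ u ∉ A := by
    intro v u hv hu
    by_contra hcon
    push_neg at hcon
    have hvu : u ≠ v := by
      intro h; subst h; exact absurd hv (not_lt.mpr hu.le)
    set 𝒮 : Finset (Finset V) := univ.filter (fun A => v ∈ A ∧ u ∉ A) with h𝒮
    have hvmem : ({v} : Finset V) ∈ 𝒮 := by
      simp [h𝒮, hvu]
    have h𝒮ne : 𝒮.Nonempty := ⟨{v}, hvmem⟩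
    set ε : ℝ := min (x u) (𝒮.inf' h𝒮ne (fun A => f A - ∑ w ∈ A, x w)) with hε
    have hεpos : 0 < ε := by
      refine lt_min hu ?_
      rw [Finset.lt_inf'_iff]
      intro A hA
      simp only [h𝒮, Finset.mem_filter, Finset.mem_univ, true_and] at hA
      have hle := hxK.1 A
      rcases lt_or_eq_of_le hle with h | h
      · linarith
      · exact absurd (hcon A h hA.1) hA.2
    have hεu : ε ≤ x u := min_le_left _ _
    have hεs : ∀ A : Finset V, v ∈ A → u ∉ A → ε ≤ f A - ∑ w ∈ A, x w := by
      intro A hvA huA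
      have : A ∈ 𝒮 := by simp [h𝒮, hvA, huA]
      exact le_trans (min_le_right _ _) (Finset.inf'_le _ this)
    set y : V → ℝ := fun w => x w + ((if w = v then ε else 0) - (if w = u then ε else 0))
      with hy
    have hysum : ∀ A : Finset V, ∑ w ∈ A, y w =
        ∑ w ∈ A, x w + ((if v ∈ A then ε else 0) - (if u ∈ A then ε else 0)) := by
      intro A
      simp only [hy]
      rw [Finset.sum_add_distrib, Finset.sum_sub_distrib]
      congr 1
      congr 1
      · simp [Finset.sum_ite_eq' A v (fun _ => ε)]
      · simp [Finset.sum_ite_eq' A u (fun _ => ε)]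
    have hyK : y ∈ basePolytope f := by
      constructor
      · intro A
        rw [hysum A]
        have hfeas := hxK.1 A
        by_cases hvA : v ∈ A <;> by_cases huA : u ∈ A <;> simp [hvA, huA]
        · exact hfeas
        · have := hεs A hvA huA; linarith
        · linarith
        · exact hfeas
      · rw [hysum univ]
        simp [hxK.2]
    have hlt : (∑ w, min (x w) 0) < ∑ w, min (y w) 0 := by
      refine Finset.sum_lt_sum (fun w _ => ?_) ⟨v, mem_univ v, ?_⟩
      · by_cases hwv : w = v
        · subst hwv
          have : x w < y w := by simp [hy, hvu.symm, hεpos]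
          exact min_le_min this.le le_rfl
        · by_cases hwu : w = u
          · subst hwu
            have hyw : y w = x w - ε := by simp [hy, hwv]; ring
            rw [hyw, min_eq_right hu.le, min_eq_right (by linarith : (0:ℝ) ≤ x w - ε)]
          · have : y w = x w := by simp [hy, hwv, hwu]
            rw [this]
      · have hyv : y v = x v + ε := by simp [hy, hvu.symm]
        rw [hyv, min_eq_left hv.le]
        exact lt_min (by linarith) hv
    exact absurd (hxmax y hyK) (not_le.mpr hlt)
  -- build the optimal set
  set T : V → Finset V := fun v =>
    ((univ : Finset (Finset V)).filter (fun A => v ∈ A ∧ tight A)).inf id with hT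
  have hTmem : ∀ v, v ∈ T v := by
    intro v
    refine Finset.inf_induction (p := fun A => v ∈ A) (mem_univ v)
      (fun A hA B hB => Finset.mem_inter.mpr ⟨hA, hB⟩)
      (fun A hA => (Finset.mem_filter.mp hA).2.1)
  have hTtight : ∀ v, x v < 0 → tight (T v) := by
    intro v hv
    refine Finset.inf_induction (p := tight) tight_univ (fun A hA B hB => ?_)
      (fun A hA => (Finset.mem_filter.mp hA).2.2)
    -- tight intersection
    · have key := hf A B
      have hsum : ∑ w ∈ A ∪ B, x w + ∑ w ∈ A ∩ B, x w = ∑ w ∈ A, x w + ∑ w ∈ B, x w :=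
        Finset.sum_union_inter
      have h1 := hxK.1 (A ∪ B)
      have h2 := hxK.1 (A ∩ B)
      simp only [htight, Finset.inf_eq_inter] at hA hB ⊢
      linarith
  have hTnopos : ∀ v, x v < 0 → ∀ u ∈ T v, ¬ (0 < x u) := by
    intro v hv u hu hupos
    obtain ⟨A, hAt, hvA, huA⟩ := exchange v u hv hupos
    have hA𝒯 : A ∈ (univ : Finset (Finset V)).filter (fun A => v ∈ A ∧ tight A) :=
      Finset.mem_filter.mpr ⟨mem_univ A, hvA, hAt⟩
    have hle : T v ⊆ A := Finset.le_iff_subset.mp (Finset.inf_le hA𝒯)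
    exact huA (hle hu)
  set N : Finset V := univ.filter (fun v => x v < 0) with hN
  set S : Finset V := N.sup T with hS
  have hStight : tight S := by
    refine Finset.sup_induction tight_empty (fun A hA B hB => ?_)
      (fun v hv => hTtight v (Finset.mem_filter.mp hv).2)
    have hAB : A ⊔ B = A ∪ B := rfl
    rw [hAB]
    exact tight_union A B hA hB
  have hNS : N ⊆ S := by
    intro v hv
    exact Finset.le_iff_subset.mp (Finset.le_sup hv) (hTmem v)
  have hSnopos : ∀ u ∈ S, x u ≤ 0 := by
    intro u hu
    rw [hS, Finset.mem_sup] at hu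
    obtain ⟨v, hvN, huT⟩ := hu
    exact not_lt.mp (hTnopos v (Finset.mem_filter.mp hvN).2 u huT)
  refine ⟨S, ?_, weak⟩
  have h1 : ∑ v, min (x v) 0 = ∑ v ∈ S, min (x v) 0 := by
    symm
    refine Finset.sum_subset (Finset.subset_univ S) (fun v _ hvS => ?_)
    have : ¬ (x v < 0) := fun h => hvS (hNS (Finset.mem_filter.mpr ⟨mem_univ v, h⟩))
    simp [min_eq_right (not_lt.mp this)]
  have h2 : ∑ v ∈ S, min (x v) 0 = ∑ v ∈ S, x v :=
    Finset.sum_congr rfl fun v hv => min_eq_left (hSnopos v hv)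
  rw [h1, h2, hStight]
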